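/- Let $D : \Omega \to \mathbb{R}^+$ be a random variable on a probability space and let $\rho : \Omega \to \mathbb{R}^+$ be a random variable such that $D \le e^\rho$ almost surely and $\mathbb{P}\{\rho > R\} \le C\exp(\alpha R/2 - R^2/(8\sigma^2))$ for all $R \ge R_0$, for some constants $C, \alpha, \sigma, R_0 > 0$. If $h : \mathbb{R}^+ \to \mathbb{R}^+$ is monotonically increasing with $h(e^y) = O(\exp[y^2(1/(8\sigma^2) - \delta)])$ for some $\delta > 0$, then $\mathbb{E}[h(D)] < \infty$. -/

import Mathlib

open MeasureTheory

lemma monoExt_measurable (h : ℝ → ℝ) (hpos : ∀ y > 0, 0 ≤ h y)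
    (hmono : MonotoneOn h (Set.Ioi (0:ℝ))) :
    Measurable (fun y : ℝ => if 0 < y then h y else -1) := by
  apply Monotone.measurable
  intro a b hab
  by_cases ha : 0 < a
  · have hb : 0 < b := lt_of_lt_of_le ha hab
    simp only [if_pos ha, if_pos hb]
    exact hmono ha hb hab
  · by_cases hb : 0 < b
    · simp only [if_neg ha, if_pos hb]
      have := hpos b hb; linarith
    · simp [ha, hb]

/-- Integrability of a functional dominated by `e^ρ`, when `ρ` has a Gaussian-type
tail bound: if `D ≤ e^ρ` a.s., `P{ρ > R} ≤ C exp(αR/2 - R²/(8σ²))` for `R ≥ R₀`,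
and `h : ℝ⁺ → ℝ⁺` is monotone increasing with `h(e^y) = O(exp[y²(1/(8σ²) - δ)])`
for some `δ > 0`, then `E[h(D)] < ∞`. -/
theorem integrability_of_dominated_functional
    {Ω : Type*} [MeasurableSpace Ω] (μ : Measure Ω) [IsProbabilityMeasure μ]
    (D ρ : Ω → ℝ) (hDmeas : Measurable D) (hρmeas : Measurable ρ)
    (hDpos : ∀ ω, 0 ≤ D ω) (hρpos : ∀ ω, 0 ≤ ρ ω)
    (hdom : ∀ᵐ ω ∂μ, D ω ≤ Real.exp (ρ ω))
    (C α σ R₀ : ℝ) (hC : 0 < C) (hα : 0 < α) (hσ : 0 < σ) (hR₀ : 0 < R₀)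
    (htail : ∀ R ≥ R₀, μ {ω | R < ρ ω}
      ≤ ENNReal.ofReal (C * Real.exp (α * R / 2 - R ^ 2 / (8 * σ ^ 2))))
    (δ : ℝ) (hδ : 0 < δ)
    (h : ℝ → ℝ) (hpos : ∀ y > 0, 0 ≤ h y)
    (hmono : MonotoneOn h (Set.Ioi (0:ℝ)))
    (hO : ∃ C' y₀ : ℝ, ∀ y ≥ y₀,
      h (Real.exp y) ≤ C' * Real.exp (y ^ 2 * (1 / (8 * σ ^ 2) - δ))) :
    Integrable (fun ω => h (D ω)) μ := by
  classical
  obtain ⟨C', y₀, hO⟩ := hO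
  set he : ℝ → ℝ := fun y => if 0 < y then h y else -1 with hhe
  have heMeas : Measurable he := monoExt_measurable h hpos hmono
  have hC' : 0 ≤ C' := by
    have h1 := hO y₀ le_rfl
    have h2 := hpos (Real.exp y₀) (Real.exp_pos y₀)
    nlinarith [Real.exp_pos (y₀ ^ 2 * (1 / (8 * σ ^ 2) - δ))]
  -- the dominating function g ω = h (exp (ρ ω))
  set g : Ω → ℝ := fun ω => h (Real.exp (ρ ω)) with hg
  have hgpos : ∀ ω, 0 ≤ g ω := fun ω => hpos _ (Real.exp_pos _)
  have hgmeas : Measurable g := by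
    have : g = fun ω => he (Real.exp (ρ ω)) := by
      funext ω; simp [hg, hhe, Real.exp_pos]
    rw [this]
    exact heMeas.comp (Real.measurable_exp.comp hρmeas)
  -- choose N
  obtain ⟨N, hN⟩ := exists_nat_ge (max (R₀ + 2) y₀)
  have hNR : R₀ + 2 ≤ (N : ℝ) := le_trans (le_max_left _ _) hN
  have hNy : y₀ ≤ (N : ℝ) := le_trans (le_max_right _ _) hN
  -- the sets S k
  set S : ℕ → Set Ω := fun k => {ω | (k : ℝ) - 1 ≤ ρ ω ∧ ρ ω < (k : ℝ)} with hS
  have hSmeas : ∀ k, MeasurableSet (S k) := by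
    intro k
    have : S k = {ω | (k : ℝ) - 1 ≤ ρ ω} ∩ {ω | ρ ω < (k : ℝ)} := by
      ext ω; simp [hS, Set.mem_setOf_eq]
    rw [this]
    exact (measurableSet_le measurable_const hρmeas).inter
      (measurableSet_lt hρmeas measurable_const)
  -- the real bound sequence
  set u : ℕ → ℝ := fun k =>
    (C' * Real.exp ((k : ℝ) ^ 2 * (1 / (8 * σ ^ 2) - δ))) *
      (C * Real.exp (α * ((k : ℝ) - 3/2) / 2 - ((k : ℝ) - 3/2) ^ 2 / (8 * σ ^ 2))) with hu
  have hunonneg : ∀ k, 0 ≤ u k := by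
    intro k
    apply mul_nonneg (mul_nonneg hC' (Real.exp_pos _).le)
      (mul_nonneg hC.le (Real.exp_pos _).le)
  have husum : Summable u := by
    set A : ℝ := α / 2 + 3 / (8 * σ ^ 2) + δ with hA
    set B : ℝ := A ^ 2 / (4 * δ) - 3 * α / 4 - 9 / (4 * (8 * σ ^ 2)) with hB
    have hs : (0:ℝ) < 8 * σ ^ 2 := by positivity
    have key : ∀ k : ℕ, u k ≤ (C * C' * Real.exp B) * Real.exp (-δ) ^ k := by
      intro k
      have hx : (0:ℝ) ≤ (k:ℝ) := Nat.cast_nonneg k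
      set x : ℝ := (k : ℝ) with hxdef
      have hexp : x ^ 2 * (1 / (8 * σ ^ 2) - δ) +
          (α * (x - 3/2) / 2 - (x - 3/2) ^ 2 / (8 * σ ^ 2)) ≤ B - δ * x := by
        have expand : x ^ 2 * (1 / (8 * σ ^ 2) - δ) +
            (α * (x - 3/2) / 2 - (x - 3/2) ^ 2 / (8 * σ ^ 2)) =
            -δ * x ^ 2 + A * x - δ * x - 3 * α / 4 - 9 / (4 * (8 * σ ^ 2)) := by
          rw [hA]
          field_simp
          ring
        rw [expand, hB]
        have h4δ : (0:ℝ) < 4 * δ := by linarith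
        have h1 : (-δ * x ^ 2 + A * x) * (4 * δ) ≤ A ^ 2 := by
          nlinarith [sq_nonneg (A - 2 * δ * x)]
        have h2 : -δ * x ^ 2 + A * x ≤ A ^ 2 / (4 * δ) := (le_div_iff₀ h4δ).2 h1
        linarith
      have hrw : u k = (C * C') * Real.exp ((x ^ 2 * (1 / (8 * σ ^ 2) - δ)) +
          (α * (x - 3/2) / 2 - (x - 3/2) ^ 2 / (8 * σ ^ 2))) := by
        rw [Real.exp_add, hu]; ring
      have hrw2 : (C * C' * Real.exp B) * Real.exp (-δ) ^ k
          = (C * C') * Real.exp (B - δ * x) := by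
        rw [← Real.exp_nat_mul, mul_assoc, ← Real.exp_add]
        congr 1
        rw [hxdef, mul_comm δ, mul_neg, ← sub_eq_add_neg]
      rw [hrw, hrw2]
      exact mul_le_mul_of_nonneg_left (Real.exp_le_exp.2 hexp)
        (mul_nonneg hC.le hC')
    apply Summable.of_nonneg_of_le hunonneg key
    exact (summable_geometric_of_lt_one (Real.exp_nonneg _)
      (Real.exp_lt_one_iff.mpr (by linarith))).mul_left _
  -- the combined bound
  set v : ℕ → ℝ := fun k => if k < N then h (Real.exp (k : ℝ)) else u k with hv
  have hvnonneg : ∀ k, 0 ≤ v k := by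
    intro k
    by_cases hk : k < N
    · simp only [hv, if_pos hk]; exact hpos _ (Real.exp_pos _)
    · simp only [hv, if_neg hk]; exact hunonneg k
  have hvsum : Summable v := by
    rw [← summable_nat_add_iff N]
    have : (fun n => v (n + N)) = fun n => u (n + N) := by
      funext n; simp only [hv, if_neg (by omega : ¬ n + N < N)]
    rw [this, summable_nat_add_iff N]
    exact husum
  -- pointwise bound by the indicator sum
  have ptwise : ∀ ω, ENNReal.ofReal (g ω) ≤
      ∑' k : ℕ, (S k).indicator (fun _ => ENNReal.ofReal (h (Real.exp (k : ℝ)))) ω := by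
    intro ω
    set k₀ : ℕ := ⌊ρ ω⌋₊ + 1 with hk₀
    have hmem : ω ∈ S k₀ := by
      constructor
      · push_cast [hk₀]
        have := Nat.floor_le (hρpos ω)
        linarith
      · push_cast [hk₀]
        exact Nat.lt_floor_add_one _
    calc ENNReal.ofReal (g ω) ≤ ENNReal.ofReal (h (Real.exp (k₀ : ℝ))) := by
          apply ENNReal.ofReal_le_ofReal
          exact hmono (Set.mem_Ioi.2 (Real.exp_pos _)) (Set.mem_Ioi.2 (Real.exp_pos _))
            (Real.exp_le_exp.2 hmem.2.le)
      _ = (S k₀).indicator (fun _ => ENNReal.ofReal (h (Real.exp (k₀ : ℝ)))) ω := by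
          rw [Set.indicator_of_mem hmem]
      _ ≤ _ := le_trans (le_of_eq rfl) (ENNReal.le_tsum k₀)
  -- termwise bound
  have termbound : ∀ k : ℕ, ENNReal.ofReal (h (Real.exp (k : ℝ))) * μ (S k)
      ≤ ENNReal.ofReal (v k) := by
    intro k
    by_cases hk : k < N
    · simp only [hv, if_pos hk]
      calc ENNReal.ofReal (h (Real.exp (k : ℝ))) * μ (S k)
          ≤ ENNReal.ofReal (h (Real.exp (k : ℝ))) * 1 :=
            mul_le_mul_right prob_le_one _
        _ = ENNReal.ofReal (h (Real.exp (k : ℝ))) := mul_one _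
    · have hkN : N ≤ k := not_lt.1 hk
      have hkR : (k : ℝ) ≥ (N : ℝ) := Nat.cast_le.2 hkN
      have hky : (k : ℝ) ≥ y₀ := le_trans hNy hkR
      have hkR₀ : R₀ ≤ (k : ℝ) - 3/2 := by linarith
      have hb1 : ENNReal.ofReal (h (Real.exp (k : ℝ))) ≤
          ENNReal.ofReal (C' * Real.exp ((k : ℝ) ^ 2 * (1 / (8 * σ ^ 2) - δ))) :=
        ENNReal.ofReal_le_ofReal (hO _ hky)
      have hb2 : μ (S k) ≤ ENNReal.ofReal
          (C * Real.exp (α * ((k : ℝ) - 3/2) / 2 - ((k : ℝ) - 3/2) ^ 2 / (8 * σ ^ 2))) := by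
        refine le_trans (measure_mono ?_) (htail _ hkR₀)
        intro ω hω
        have := hω.1
        simp only [Set.mem_setOf_eq]
        linarith
      calc ENNReal.ofReal (h (Real.exp (k : ℝ))) * μ (S k)
          ≤ ENNReal.ofReal (C' * Real.exp ((k : ℝ) ^ 2 * (1 / (8 * σ ^ 2) - δ))) *
            ENNReal.ofReal (C * Real.exp (α * ((k : ℝ) - 3/2) / 2 -
              ((k : ℝ) - 3/2) ^ 2 / (8 * σ ^ 2))) := mul_le_mul' hb1 hb2
        _ = ENNReal.ofReal (u k) := by
            rw [← ENNReal.ofReal_mul (mul_nonneg hC' (Real.exp_pos _).le)]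
        _ = ENNReal.ofReal (v k) := by simp only [hv, if_neg hk]
  -- finiteness of the lintegral of g
  have hgfin : ∫⁻ ω, ENNReal.ofReal (g ω) ∂μ < ⊤ := by
    calc ∫⁻ ω, ENNReal.ofReal (g ω) ∂μ
        ≤ ∫⁻ ω, ∑' k : ℕ, (S k).indicator
            (fun _ => ENNReal.ofReal (h (Real.exp (k : ℝ)))) ω ∂μ :=
          lintegral_mono ptwise
      _ = ∑' k : ℕ, ∫⁻ ω, (S k).indicator
            (fun _ => ENNReal.ofReal (h (Real.exp (k : ℝ)))) ω ∂μ := by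
          apply lintegral_tsum
          intro k
          exact (measurable_const.indicator (hSmeas k)).aemeasurable
      _ = ∑' k : ℕ, ENNReal.ofReal (h (Real.exp (k : ℝ))) * μ (S k) := by
          congr 1; funext k
          rw [lintegral_indicator_const (hSmeas k)]
      _ ≤ ∑' k : ℕ, ENNReal.ofReal (v k) := ENNReal.tsum_le_tsum termbound
      _ = ENNReal.ofReal (∑' k, v k) :=
          (ENNReal.ofReal_tsum_of_nonneg hvnonneg hvsum).symm
      _ < ⊤ := ENNReal.ofReal_lt_top
  have hgint : Integrable g μ := by
    refine ⟨hgmeas.aestronglyMeasurable, ?_⟩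
    rw [hasFiniteIntegral_iff_ofReal (Filter.Eventually.of_forall hgpos)]
    exact hgfin
  -- measurability of h ∘ D
  have hhDmeas : Measurable (fun ω => h (D ω)) := by
    have heq : (fun ω => h (D ω)) = fun ω => if 0 < D ω then he (D ω) else h 0 := by
      funext ω
      by_cases hω : 0 < D ω
      · simp [hhe, hω]
      · have : D ω = 0 := le_antisymm (not_lt.1 hω) (hDpos ω)
        simp [hω, this]
    rw [heq]
    exact Measurable.ite (measurableSet_lt measurable_const hDmeas)
      (heMeas.comp hDmeas) measurable_const
  -- conclude by domination
  have hbound : Integrable (fun ω => |h 0| + g ω) μ :=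
    (integrable_const _).add hgint
  apply hbound.mono hhDmeas.aestronglyMeasurable
  filter_upwards [hdom] with ω hω
  have hrhs : 0 ≤ |h 0| + g ω := add_nonneg (abs_nonneg _) (hgpos ω)
  rw [Real.norm_eq_abs, Real.norm_eq_abs, abs_of_nonneg hrhs]
  by_cases hω' : 0 < D ω
  · have h1 : h (D ω) ≤ g ω :=
      hmono (Set.mem_Ioi.2 hω') (Set.mem_Ioi.2 (Real.exp_pos _)) hω
    have h2 : 0 ≤ h (D ω) := hpos _ hω'
    rw [abs_of_nonneg h2]
    have := abs_nonneg (h 0)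
    linarith
  · have : D ω = 0 := le_antisymm (not_lt.1 hω') (hDpos ω)
    rw [this]
    have := hgpos ω
    have := le_abs_self (h 0)
    have := abs_abs (h 0)
    calc |h 0| ≤ |h 0| + g ω := by linarith [hgpos ω]
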